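/- Let η, R_rad, λ, r, Ψ > 0 and Φ, Θ ∈ ℝ, set k₀ = 2π/λ and f_n(x, z) = ((x − Φ)² + Ψ² + (z − Θ)²)^{−n/2}, and for L_x, L_z > 0 define G̃(L_x, L_z) = (η/(8 R_rad)) · (Ψ/(4π)) · ∬_{[−L_x/(2r), L_x/(2r)] × [−L_z/(2r), L_z/(2r)]} ( f₃ − (1/(k₀² r²)) f₅ + (1/(k₀⁴ r⁴)) f₇ ) dx dz. Then as L_x and L_z both tend to infinity, G̃(L_x, L_z) converges to (η/(8 R_rad)) · (1/2 − λ²/(24 π² r² Ψ²) + λ⁴/(160 π⁴ r⁴ Ψ⁴)). -/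

import Mathlib

open Real MeasureTheory Filter Topology

private lemma cor3_cont (p : ℝ) : Continuous fun t : ℝ => (1 + t ^ 2) ^ (-p) := by
  refine Continuous.rpow_const (by continuity) fun t => Or.inl (by positivity)

private lemma cor3_integrable_base {p : ℝ} (hp : 1 ≤ p) :
    Integrable fun t : ℝ => (1 + t ^ 2) ^ (-p) := by
  refine integrable_inv_one_add_sq.mono (cor3_cont p).aestronglyMeasurable
    (ae_of_all _ fun t => ?_)
  have h1 : (1:ℝ) ≤ 1 + t ^ 2 := by nlinarith
  rw [Real.norm_of_nonneg (by positivity), Real.norm_of_nonneg (by positivity)]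
  calc (1 + t ^ 2) ^ (-p) ≤ (1 + t ^ 2) ^ (-(1:ℝ)) :=
        Real.rpow_le_rpow_of_exponent_le h1 (by linarith)
    _ = (1 + t ^ 2)⁻¹ := by rw [Real.rpow_neg_one]

private lemma cor3_hasDerivAt_w (t : ℝ) :
    HasDerivAt (fun t : ℝ => (1 + t ^ 2) ^ (-(1/2) : ℝ))
      (2 * t * (-(1/2)) * (1 + t ^ 2) ^ (-(1/2) - 1 : ℝ)) t := by
  have h : HasDerivAt (fun t : ℝ => 1 + t ^ 2) (2 * t) t := by
    simpa using (hasDerivAt_pow 2 t).const_add 1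
  exact h.rpow_const (Or.inl (by positivity))

private lemma cor3_rpow_hpow {q : ℝ} (hq : 0 < q) (n : ℕ) :
    q ^ (-((n : ℝ) / 2)) = (q ^ (-(1/2) : ℝ)) ^ n := by
  rw [← Real.rpow_natCast (q ^ (-(1/2) : ℝ)) n, ← Real.rpow_mul hq.le]
  congr 1; push_cast; ring

/-- derivative of `u t = t * (1+t^2)^(-1/2)` is `(1+t^2)^(-3/2)` -/
private lemma cor3_hasDerivAt_u (t : ℝ) :
    HasDerivAt (fun t : ℝ => t * (1 + t ^ 2) ^ (-(1/2) : ℝ))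
      ((1 + t ^ 2) ^ (-(3/2) : ℝ)) t := by
  have h := (hasDerivAt_id t).mul (cor3_hasDerivAt_w t)
  have hq : (0:ℝ) < 1 + t ^ 2 := by positivity
  refine h.congr_deriv (Eq.symm ?_)
  set w := (1 + t ^ 2) ^ (-(1/2) : ℝ) with hw
  have h3 : (1 + t ^ 2) ^ (-(3/2) : ℝ) = w ^ 3 := by
    have := cor3_rpow_hpow hq 3; norm_num at this ⊢; exact this
  have hexp : (1 + t ^ 2) ^ (-(1/2) - 1 : ℝ) = w ^ 3 := by
    rw [show (-(1/2) - 1 : ℝ) = -((3:ℕ) / 2) by norm_num, cor3_rpow_hpow hq]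
  have hrel : (1 + t ^ 2) * w ^ 2 = 1 := by
    rw [hw, ← Real.rpow_natCast ((1 + t ^ 2) ^ (-(1/2) : ℝ)) 2, ← Real.rpow_mul hq.le]
    norm_num
    rw [Real.rpow_neg_one]
    exact mul_inv_cancel₀ hq.ne'
  rw [h3, hexp, id_eq]
  linear_combination w * hrel

private lemma cor3_u_top :
    Tendsto (fun t : ℝ => t * (1 + t ^ 2) ^ (-(1/2) : ℝ)) atTop (𝓝 1) := by
  have h0 : Tendsto (fun t : ℝ => ((t ^ 2)⁻¹ + 1 : ℝ) ^ (-(1/2) : ℝ)) atTop (𝓝 1) := by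
    have h1 : Tendsto (fun t : ℝ => (t ^ 2)⁻¹ + 1) atTop (𝓝 (0 + 1)) := by
      exact ((tendsto_pow_atTop two_ne_zero).inv_tendsto_atTop).add tendsto_const_nhds
    norm_num at h1
    simpa using h1.rpow_const (Or.inl one_ne_zero)
  refine Tendsto.congr' ?_ h0
  filter_upwards [eventually_gt_atTop (0:ℝ)] with t ht
  have ht2 : (0:ℝ) < t ^ 2 := by positivity
  have key : (1 + t ^ 2 : ℝ) = t ^ 2 * ((t ^ 2)⁻¹ + 1) := by field_simp
  rw [key, Real.mul_rpow ht2.le (by positivity)]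
  have : (t ^ 2 : ℝ) ^ (-(1/2) : ℝ) = t⁻¹ := by
    rw [← Real.rpow_natCast t 2, ← Real.rpow_mul ht.le,
      show ((2:ℕ):ℝ) * -(1/2) = -1 by norm_num, Real.rpow_neg_one]
  rw [this, ← mul_assoc, mul_inv_cancel₀ ht.ne', one_mul]

private lemma cor3_u_bot :
    Tendsto (fun t : ℝ => t * (1 + t ^ 2) ^ (-(1/2) : ℝ)) atBot (𝓝 (-1)) := by
  have h := cor3_u_top.comp tendsto_neg_atBot_atTop
  have heq : (fun t : ℝ => ((-t) * (1 + (-t) ^ 2) ^ (-(1/2) : ℝ))) =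
      fun t : ℝ => -(t * (1 + t ^ 2) ^ (-(1/2) : ℝ)) := by
    funext t; rw [neg_sq]; ring
  rw [show Tendsto _ atBot _ ↔ _ from Iff.rfl] at h
  have h2 : Tendsto (fun t : ℝ => -(t * (1 + t ^ 2) ^ (-(1/2) : ℝ))) atBot (𝓝 1) := by
    refine h.congr fun t => ?_
    simp only [Function.comp]; rw [neg_sq]; ring
  have := h2.neg
  norm_num at this
  exact this

private lemma cor3_hrel (t : ℝ) : (1 + t ^ 2) * ((1 + t ^ 2) ^ (-(1/2) : ℝ)) ^ 2 = 1 := by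
  have hq : (0:ℝ) < 1 + t ^ 2 := by positivity
  rw [← Real.rpow_natCast ((1 + t ^ 2) ^ (-(1/2) : ℝ)) 2, ← Real.rpow_mul hq.le]
  norm_num
  rw [Real.rpow_neg_one]
  exact mul_inv_cancel₀ hq.ne'

private lemma cor3_B32 : ∫ t : ℝ, (1 + t ^ 2) ^ (-(3/2) : ℝ) = 2 := by
  have h := MeasureTheory.integral_of_hasDerivAt_of_tendsto cor3_hasDerivAt_u
    (cor3_integrable_base (by norm_num : (1:ℝ) ≤ 3/2)) cor3_u_bot cor3_u_top
  rw [h]; norm_num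

private lemma cor3_hasDerivAt_F5 (t : ℝ) :
    HasDerivAt (fun t : ℝ => (fun y : ℝ => y - y ^ 3 / 3) (t * (1 + t ^ 2) ^ (-(1/2) : ℝ)))
      ((1 + t ^ 2) ^ (-(5/2) : ℝ)) t := by
  have h := (cor3_hasDerivAt_u t).sub (((cor3_hasDerivAt_u t).pow 3).div_const 3)
  have hq : (0:ℝ) < 1 + t ^ 2 := by positivity
  refine h.congr_deriv (Eq.symm ?_)
  set w := (1 + t ^ 2) ^ (-(1/2) : ℝ) with hw
  have h3 : (1 + t ^ 2) ^ (-(3/2) : ℝ) = w ^ 3 := by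
    have := cor3_rpow_hpow hq 3; norm_num at this ⊢; exact this
  have h5 : (1 + t ^ 2) ^ (-(5/2) : ℝ) = w ^ 5 := by
    have := cor3_rpow_hpow hq 5; norm_num at this ⊢; exact this
  have hrel := cor3_hrel t
  rw [h3, h5]
  linear_combination (w ^ 3) * hrel

private lemma cor3_B52 : ∫ t : ℝ, (1 + t ^ 2) ^ (-(5/2) : ℝ) = 4 / 3 := by
  have htop : Tendsto (fun t : ℝ => (fun y : ℝ => y - y ^ 3 / 3)
      (t * (1 + t ^ 2) ^ (-(1/2) : ℝ))) atTop (𝓝 ((1:ℝ) - 1 ^ 3 / 3)) :=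
    cor3_u_top.sub ((cor3_u_top.pow 3).div_const 3)
  have hbot : Tendsto (fun t : ℝ => (fun y : ℝ => y - y ^ 3 / 3)
      (t * (1 + t ^ 2) ^ (-(1/2) : ℝ))) atBot (𝓝 ((-1:ℝ) - (-1) ^ 3 / 3)) :=
    cor3_u_bot.sub ((cor3_u_bot.pow 3).div_const 3)
  have h := MeasureTheory.integral_of_hasDerivAt_of_tendsto cor3_hasDerivAt_F5
    (cor3_integrable_base (by norm_num : (1:ℝ) ≤ 5/2)) hbot htop
  rw [h]; norm_num

private lemma cor3_hasDerivAt_F7 (t : ℝ) :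
    HasDerivAt (fun t : ℝ => (fun y : ℝ => y - 2/3 * y ^ 3 + 1/5 * y ^ 5)
      (t * (1 + t ^ 2) ^ (-(1/2) : ℝ)))
      ((1 + t ^ 2) ^ (-(7/2) : ℝ)) t := by
  have h := ((cor3_hasDerivAt_u t).sub
      (((cor3_hasDerivAt_u t).pow 3).const_mul (2/3 : ℝ))).add
      (((cor3_hasDerivAt_u t).pow 5).const_mul (1/5 : ℝ))
  have hq : (0:ℝ) < 1 + t ^ 2 := by positivity
  refine h.congr_deriv (Eq.symm ?_)
  set w := (1 + t ^ 2) ^ (-(1/2) : ℝ) with hw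
  have h3 : (1 + t ^ 2) ^ (-(3/2) : ℝ) = w ^ 3 := by
    have := cor3_rpow_hpow hq 3; norm_num at this ⊢; exact this
  have h7 : (1 + t ^ 2) ^ (-(7/2) : ℝ) = w ^ 7 := by
    have := cor3_rpow_hpow hq 7; norm_num at this ⊢; exact this
  have hrel := cor3_hrel t
  rw [h3, h7]
  linear_combination (w ^ 3 * (2 * w ^ 2 - ((1 + t ^ 2) * w ^ 2 - 1))) * hrel

private lemma cor3_B72 : ∫ t : ℝ, (1 + t ^ 2) ^ (-(7/2) : ℝ) = 16 / 15 := by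
  have htop : Tendsto (fun t : ℝ => (fun y : ℝ => y - 2/3 * y ^ 3 + 1/5 * y ^ 5)
      (t * (1 + t ^ 2) ^ (-(1/2) : ℝ))) atTop
      (𝓝 ((1:ℝ) - 2/3 * 1 ^ 3 + 1/5 * 1 ^ 5)) :=
    (cor3_u_top.sub ((cor3_u_top.pow 3).const_mul _)).add ((cor3_u_top.pow 5).const_mul _)
  have hbot : Tendsto (fun t : ℝ => (fun y : ℝ => y - 2/3 * y ^ 3 + 1/5 * y ^ 5)
      (t * (1 + t ^ 2) ^ (-(1/2) : ℝ))) atBot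
      (𝓝 ((-1:ℝ) - 2/3 * (-1) ^ 3 + 1/5 * (-1) ^ 5)) :=
    (cor3_u_bot.sub ((cor3_u_bot.pow 3).const_mul _)).add ((cor3_u_bot.pow 5).const_mul _)
  have h := MeasureTheory.integral_of_hasDerivAt_of_tendsto cor3_hasDerivAt_F7
    (cor3_integrable_base (by norm_num : (1:ℝ) ≤ 7/2)) hbot htop
  rw [h]; norm_num

private lemma cor3_q_top : Tendsto (fun t : ℝ => 1 + t ^ 2) atTop atTop :=
  tendsto_atTop_add_const_left _ 1 (tendsto_pow_atTop two_ne_zero)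

private lemma cor3_q_bot : Tendsto (fun t : ℝ => 1 + t ^ 2) atBot atTop := by
  refine tendsto_atTop_add_const_left _ 1 ?_
  have := (tendsto_pow_atTop (two_ne_zero)).comp tendsto_neg_atBot_atTop (α := ℝ)
  refine this.congr fun t => ?_
  simp [Function.comp, neg_sq]

private lemma cor3_w_top : Tendsto (fun t : ℝ => (1 + t ^ 2) ^ (-(1/2) : ℝ)) atTop (𝓝 0) :=
  (tendsto_rpow_neg_atTop (by norm_num : (0:ℝ) < 1/2)).comp cor3_q_top

private lemma cor3_w_bot : Tendsto (fun t : ℝ => (1 + t ^ 2) ^ (-(1/2) : ℝ)) atBot (𝓝 0) :=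
  (tendsto_rpow_neg_atTop (by norm_num : (0:ℝ) < 1/2)).comp cor3_q_bot

private lemma cor3_hasDerivAt_F2 (t : ℝ) :
    HasDerivAt (fun t : ℝ =>
      (t * ((1 + t ^ 2) ^ (-(1/2) : ℝ)) ^ 2 + Real.arctan t) / 2)
      ((1 + t ^ 2) ^ (-(2:ℝ))) t := by
  have h := (((hasDerivAt_id t).mul ((cor3_hasDerivAt_w t).pow 2)).add
    (Real.hasDerivAt_arctan t)).div_const 2
  have hq : (0:ℝ) < 1 + t ^ 2 := by positivity
  refine h.congr_deriv (Eq.symm ?_)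
  set w := (1 + t ^ 2) ^ (-(1/2) : ℝ) with hw
  have hexp : (1 + t ^ 2) ^ (-(1/2) - 1 : ℝ) = w ^ 3 := by
    rw [show (-(1/2) - 1 : ℝ) = -((3:ℕ) / 2) by norm_num, cor3_rpow_hpow hq]
  have h4 : (1 + t ^ 2) ^ (-(2:ℝ)) = w ^ 4 := by
    have := cor3_rpow_hpow hq 4; norm_num at this ⊢; exact this
  have hrel := cor3_hrel t
  have h1q : 1 / (1 + t ^ 2) = w ^ 2 := by
    rw [eq_comm, eq_div_iff hq.ne']; linear_combination hrel
  simp only [Pi.pow_apply, ← hw]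
  rw [h4, hexp, h1q, id_eq]
  linear_combination (w ^ 2) * hrel

private lemma cor3_C2 : ∫ t : ℝ, (1 + t ^ 2) ^ (-(2:ℝ)) = π / 2 := by
  have hu3top := cor3_u_top.mul cor3_w_top
  have hu3bot := cor3_u_bot.mul cor3_w_bot
  have hatop := tendsto_nhds_of_tendsto_nhdsWithin Real.tendsto_arctan_atTop
  have habot := tendsto_nhds_of_tendsto_nhdsWithin Real.tendsto_arctan_atBot
  have htop : Tendsto (fun t : ℝ =>
      (t * ((1 + t ^ 2) ^ (-(1/2) : ℝ)) ^ 2 + Real.arctan t) / 2) atTop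
      (𝓝 ((1 * 0 + π / 2) / 2)) := by
    refine Tendsto.div_const ?_ 2
    refine Tendsto.add ?_ hatop
    refine hu3top.congr fun t => ?_; ring
  have hbot : Tendsto (fun t : ℝ =>
      (t * ((1 + t ^ 2) ^ (-(1/2) : ℝ)) ^ 2 + Real.arctan t) / 2) atBot
      (𝓝 ((-1 * 0 + -(π / 2)) / 2)) := by
    refine Tendsto.div_const ?_ 2
    refine Tendsto.add ?_ habot
    refine hu3bot.congr fun t => ?_; ring
  have h := MeasureTheory.integral_of_hasDerivAt_of_tendsto cor3_hasDerivAt_F2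
    (cor3_integrable_base (by norm_num : (1:ℝ) ≤ 2)) hbot htop
  rw [h]; ring

private lemma cor3_hasDerivAt_F3 (t : ℝ) :
    HasDerivAt (fun t : ℝ =>
      1/4 * (t * ((1 + t ^ 2) ^ (-(1/2) : ℝ)) ^ 4) +
      3/8 * (t * ((1 + t ^ 2) ^ (-(1/2) : ℝ)) ^ 2) + 3/8 * Real.arctan t)
      ((1 + t ^ 2) ^ (-(3:ℝ))) t := by
  have h := ((((hasDerivAt_id t).mul ((cor3_hasDerivAt_w t).pow 4)).const_mul (1/4 : ℝ)).add
      (((hasDerivAt_id t).mul ((cor3_hasDerivAt_w t).pow 2)).const_mul (3/8 : ℝ))).add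
      ((Real.hasDerivAt_arctan t).const_mul (3/8 : ℝ))
  have hq : (0:ℝ) < 1 + t ^ 2 := by positivity
  refine h.congr_deriv (Eq.symm ?_)
  set w := (1 + t ^ 2) ^ (-(1/2) : ℝ) with hw
  have hexp : (1 + t ^ 2) ^ (-(1/2) - 1 : ℝ) = w ^ 3 := by
    rw [show (-(1/2) - 1 : ℝ) = -((3:ℕ) / 2) by norm_num, cor3_rpow_hpow hq]
  have h6 : (1 + t ^ 2) ^ (-(3:ℝ)) = w ^ 6 := by
    have := cor3_rpow_hpow hq 6; norm_num at this ⊢; exact this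
  have hrel := cor3_hrel t
  have h1q : 1 / (1 + t ^ 2) = w ^ 2 := by
    rw [eq_comm, eq_div_iff hq.ne']; linear_combination hrel
  simp only [Pi.pow_apply, ← hw]
  rw [h6, hexp, h1q, id_eq]
  linear_combination (w ^ 4 + (3/4) * w ^ 2) * hrel

private lemma cor3_C3 : ∫ t : ℝ, (1 + t ^ 2) ^ (-(3:ℝ)) = 3 * π / 8 := by
  have hw2top := cor3_w_top.mul cor3_w_top
  have hw2bot := cor3_w_bot.mul cor3_w_bot
  have hatop := tendsto_nhds_of_tendsto_nhdsWithin Real.tendsto_arctan_atTop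
  have habot := tendsto_nhds_of_tendsto_nhdsWithin Real.tendsto_arctan_atBot
  have htop : Tendsto (fun t : ℝ =>
      1/4 * (t * ((1 + t ^ 2) ^ (-(1/2) : ℝ)) ^ 4) +
      3/8 * (t * ((1 + t ^ 2) ^ (-(1/2) : ℝ)) ^ 2) + 3/8 * Real.arctan t) atTop
      (𝓝 (1/4 * (1 * 0 * (0 * 0)) + 3/8 * (1 * 0) + 3/8 * (π/2))) := by
    refine Tendsto.add (Tendsto.add ?_ ?_) (hatop.const_mul _)
    · refine Tendsto.const_mul _ ?_
      refine ((cor3_u_top.mul cor3_w_top).mul hw2top).congr fun t => ?_; ring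
    · refine Tendsto.const_mul _ ?_
      refine (cor3_u_top.mul cor3_w_top).congr fun t => ?_; ring
  have hbot : Tendsto (fun t : ℝ =>
      1/4 * (t * ((1 + t ^ 2) ^ (-(1/2) : ℝ)) ^ 4) +
      3/8 * (t * ((1 + t ^ 2) ^ (-(1/2) : ℝ)) ^ 2) + 3/8 * Real.arctan t) atBot
      (𝓝 (1/4 * (-1 * 0 * (0 * 0)) + 3/8 * (-1 * 0) + 3/8 * (-(π/2)))) := by
    refine Tendsto.add (Tendsto.add ?_ ?_) (habot.const_mul _)
    · refine Tendsto.const_mul _ ?_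
      refine ((cor3_u_bot.mul cor3_w_bot).mul hw2bot).congr fun t => ?_; ring
    · refine Tendsto.const_mul _ ?_
      refine (cor3_u_bot.mul cor3_w_bot).congr fun t => ?_; ring
  have h := MeasureTheory.integral_of_hasDerivAt_of_tendsto cor3_hasDerivAt_F3
    (cor3_integrable_base (by norm_num : (1:ℝ) ≤ 3)) hbot htop
  rw [h]; ring

private lemma cor3_C1 : ∫ t : ℝ, (1 + t ^ 2) ^ (-(1:ℝ)) = π := by
  rw [← integral_univ_inv_one_add_sq]
  norm_num [Real.rpow_neg_one]

/-- scaling: `∫ (c+z²)^(-p) = c^(1/2-p) ∫ (1+t²)^(-p)` -/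
private lemma cor3_scale (p : ℝ) {c : ℝ} (hc : 0 < c) :
    ∫ z : ℝ, (c + z ^ 2) ^ (-p) = c ^ (1/2 - p) * ∫ t : ℝ, (1 + t ^ 2) ^ (-p) := by
  have hs : 0 < Real.sqrt c := Real.sqrt_pos.2 hc
  have key := MeasureTheory.Measure.integral_comp_mul_left
    (fun y : ℝ => (c + y ^ 2) ^ (-p)) (Real.sqrt c)
  have hL : (fun t : ℝ => (c + (Real.sqrt c * t) ^ 2) ^ (-p)) =
      fun t : ℝ => c ^ (-p) * (1 + t ^ 2) ^ (-p) := by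
    funext t
    rw [mul_pow, Real.sq_sqrt hc.le, show c + c * t ^ 2 = c * (1 + t ^ 2) by ring,
      Real.mul_rpow hc.le (by positivity)]
  rw [hL] at key
  rw [MeasureTheory.integral_const_mul] at key
  rw [smul_eq_mul, abs_of_pos (inv_pos.2 hs)] at key
  have h2 : ∫ z : ℝ, (c + z ^ 2) ^ (-p) =
      Real.sqrt c * (c ^ (-p) * ∫ t : ℝ, (1 + t ^ 2) ^ (-p)) := by
    rw [key, ← mul_assoc, mul_inv_cancel₀ hs.ne', one_mul]
  rw [h2, Real.sqrt_eq_rpow, ← mul_assoc, ← Real.rpow_add hc, sub_eq_add_neg]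

private lemma cor3_integrable_scaled {p : ℝ} (hp : 1 ≤ p) {c : ℝ} (hc : 0 < c) :
    Integrable fun z : ℝ => (c + z ^ 2) ^ (-p) := by
  have hmin : 0 < min c 1 := lt_min hc one_pos
  refine Integrable.mono' (g := fun z : ℝ => (min c 1) ^ (-p) * (1 + z ^ 2) ^ (-p))
    ((cor3_integrable_base hp).const_mul _)
    (Continuous.aestronglyMeasurable (Continuous.rpow_const (by continuity)
      fun z => Or.inl (by positivity))) (ae_of_all _ fun z => ?_)
  rw [Real.norm_of_nonneg (by positivity)]
  have hle : min c 1 * (1 + z ^ 2) ≤ c + z ^ 2 := by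
    have h1 : min c 1 ≤ c := min_le_left _ _
    have h2 : min c 1 ≤ 1 := min_le_right _ _
    nlinarith [sq_nonneg z]
  calc (c + z ^ 2) ^ (-p) ≤ (min c 1 * (1 + z ^ 2)) ^ (-p) :=
        Real.rpow_le_rpow_of_nonpos (by positivity) hle (by linarith)
    _ = (min c 1) ^ (-p) * (1 + z ^ 2) ^ (-p) :=
        Real.mul_rpow hmin.le (by positivity)

/-- the inner slice integral -/
private lemma cor3_slice (p : ℝ) (Θ : ℝ) {c : ℝ} (hc : 0 < c) :
    ∫ z : ℝ, (c + (z - Θ) ^ 2) ^ (-p) = c ^ (1/2 - p) * ∫ t : ℝ, (1 + t ^ 2) ^ (-p) := by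
  rw [MeasureTheory.integral_sub_right_eq_self (fun z : ℝ => (c + z ^ 2) ^ (-p)) Θ]
  exact cor3_scale p hc

private lemma cor3_slice_val (p : ℝ) (Φ Θ Ψ : ℝ) (hΨ : 0 < Ψ) (x : ℝ) :
    ∫ z : ℝ, ((x - Φ) ^ 2 + Ψ ^ 2 + (z - Θ) ^ 2) ^ (-p) =
      ((x - Φ) ^ 2 + Ψ ^ 2) ^ (1/2 - p) * ∫ t : ℝ, (1 + t ^ 2) ^ (-p) :=
  cor3_slice p Θ (by positivity)

private lemma cor3_slice_integrable {p : ℝ} (hp : 1 ≤ p) (Φ Θ Ψ : ℝ) (hΨ : 0 < Ψ) (x : ℝ) :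
    Integrable fun z : ℝ => ((x - Φ) ^ 2 + Ψ ^ 2 + (z - Θ) ^ 2) ^ (-p) :=
  (cor3_integrable_scaled hp (c := (x - Φ) ^ 2 + Ψ ^ 2) (by positivity)).comp_sub_right Θ

private lemma cor3_outer_val (p : ℝ) (Φ Ψ : ℝ) (hΨ : 0 < Ψ) :
    ∫ x : ℝ, ((x - Φ) ^ 2 + Ψ ^ 2) ^ (-p) =
      (Ψ ^ 2) ^ (1/2 - p) * ∫ t : ℝ, (1 + t ^ 2) ^ (-p) := by
  have h : ∀ x : ℝ, ((x - Φ) ^ 2 + Ψ ^ 2) ^ (-p) = (Ψ ^ 2 + (x - Φ) ^ 2) ^ (-p) :=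
    fun x => by rw [add_comm]
  simp_rw [h]
  exact cor3_slice p Φ (by positivity)

private lemma cor3_outer_integrable {p : ℝ} (hp : 1 ≤ p) (Φ Ψ : ℝ) (hΨ : 0 < Ψ) :
    Integrable fun x : ℝ => ((x - Φ) ^ 2 + Ψ ^ 2) ^ (-p) := by
  have h := (cor3_integrable_scaled hp (c := Ψ ^ 2) (by positivity)).comp_sub_right Φ
  exact h.congr (ae_of_all _ fun x => by simp only []; rw [add_comm])

private lemma cor3_int2d (p : ℝ) (hp : (3/2:ℝ) ≤ p) (Φ Θ Ψ : ℝ) (hΨ : 0 < Ψ) :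
    Integrable (fun q : ℝ × ℝ => ((q.1 - Φ) ^ 2 + Ψ ^ 2 + (q.2 - Θ) ^ 2) ^ (-p))
      ((volume : Measure ℝ).prod volume) := by
  have hmeas : AEStronglyMeasurable
      (fun q : ℝ × ℝ => ((q.1 - Φ) ^ 2 + Ψ ^ 2 + (q.2 - Θ) ^ 2) ^ (-p))
      ((volume : Measure ℝ).prod volume) := by
    apply Continuous.aestronglyMeasurable
    exact Continuous.rpow_const (by continuity) fun q => Or.inl (by positivity)
  rw [MeasureTheory.integrable_prod_iff hmeas]
  constructor
  · exact ae_of_all _ fun x => cor3_slice_integrable (by linarith) Φ Θ Ψ hΨ x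
  · have hnorm : ∀ x : ℝ, (∫ z : ℝ, ‖((x - Φ) ^ 2 + Ψ ^ 2 + (z - Θ) ^ 2) ^ (-p)‖) =
        ((x - Φ) ^ 2 + Ψ ^ 2) ^ (1/2 - p) * ∫ t : ℝ, (1 + t ^ 2) ^ (-p) := by
      intro x
      rw [← cor3_slice_val p Φ Θ Ψ hΨ x]
      congr 1; funext z; exact Real.norm_of_nonneg (by positivity)
    simp_rw [hnorm]
    apply Integrable.mul_const
    have h := cor3_outer_integrable (p := p - 1/2) (by linarith) Φ Ψ hΨ
    refine h.congr (ae_of_all _ fun x => ?_)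
    congr 1; ring

private lemma cor3_iter_total (p : ℝ) (Φ Θ Ψ : ℝ) (hΨ : 0 < Ψ) :
    ∫ x : ℝ, ∫ z : ℝ, ((x - Φ) ^ 2 + Ψ ^ 2 + (z - Θ) ^ 2) ^ (-p) =
      (Ψ ^ 2) ^ (1 - p) *
        ((∫ t : ℝ, (1 + t ^ 2) ^ (-p)) * ∫ t : ℝ, (1 + t ^ 2) ^ (-(p - 1/2))) := by
  simp_rw [cor3_slice_val p Φ Θ Ψ hΨ]
  rw [MeasureTheory.integral_mul_const]
  have h : ∀ x : ℝ, ((x - Φ) ^ 2 + Ψ ^ 2) ^ (1/2 - p) =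
      ((x - Φ) ^ 2 + Ψ ^ 2) ^ (-(p - 1/2)) := fun x => by congr 1; ring
  simp_rw [h]
  rw [cor3_outer_val (p - 1/2) Φ Ψ hΨ]
  rw [show (1/2 - (p - 1/2) : ℝ) = 1 - p by ring]
  ring

private lemma cor3_nonneg {c : ℝ} (hc : 0 ≤ c) {s : ℝ} (hs : 0 < s) :
    0 ≤ s ^ (-(3/2 : ℝ)) - c * s ^ (-(5/2 : ℝ)) + c ^ 2 * s ^ (-(7/2 : ℝ)) := by
  have hw : (0:ℝ) ≤ s ^ (-(7/2 : ℝ)) := Real.rpow_nonneg hs.le _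
  have h5 : s ^ (-(5/2 : ℝ)) = s * s ^ (-(7/2 : ℝ)) := by
    rw [show (-(5/2 : ℝ)) = 1 + -(7/2 : ℝ) by norm_num, Real.rpow_add hs, Real.rpow_one]
  have h3 : s ^ (-(3/2 : ℝ)) = s * (s * s ^ (-(7/2 : ℝ))) := by
    rw [show (-(3/2 : ℝ)) = 1 + (1 + -(7/2 : ℝ)) by norm_num, Real.rpow_add hs,
      Real.rpow_add hs, Real.rpow_one]
  rw [h3, h5]
  nlinarith [mul_nonneg hw (sq_nonneg (s - c/2)), mul_nonneg hw (sq_nonneg c)]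

private lemma cor3_prod_val (p : ℝ) (hp : (3/2:ℝ) ≤ p) (Φ Θ Ψ : ℝ) (hΨ : 0 < Ψ) :
    ∫ q : ℝ × ℝ, ((q.1 - Φ) ^ 2 + Ψ ^ 2 + (q.2 - Θ) ^ 2) ^ (-p)
        ∂((volume : Measure ℝ).prod volume) =
      (Ψ ^ 2) ^ (1 - p) *
        ((∫ t : ℝ, (1 + t ^ 2) ^ (-p)) * ∫ t : ℝ, (1 + t ^ 2) ^ (-(p - 1/2))) := by
  rw [MeasureTheory.integral_prod _ (cor3_int2d p hp Φ Θ Ψ hΨ)]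
  exact cor3_iter_total p Φ Θ Ψ hΨ

private lemma cor3_psi_base {Ψ : ℝ} (hΨ : 0 < Ψ) : ((Ψ ^ 2 : ℝ)) ^ (-(1/2) : ℝ) = Ψ⁻¹ := by
  rw [← Real.rpow_natCast Ψ 2, ← Real.rpow_mul hΨ.le,
    show ((2:ℕ):ℝ) * -(1/2) = -1 by norm_num, Real.rpow_neg_one]

private lemma cor3_psi3 {Ψ : ℝ} (hΨ : 0 < Ψ) : ((Ψ ^ 2 : ℝ)) ^ (-(3/2) : ℝ) = (Ψ⁻¹) ^ 3 := by
  rw [show (-(3/2 : ℝ)) = -((3:ℕ) / 2) by norm_num,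
    cor3_rpow_hpow (by positivity : (0:ℝ) < Ψ ^ 2), cor3_psi_base hΨ]

private lemma cor3_psi5 {Ψ : ℝ} (hΨ : 0 < Ψ) : ((Ψ ^ 2 : ℝ)) ^ (-(5/2) : ℝ) = (Ψ⁻¹) ^ 5 := by
  rw [show (-(5/2 : ℝ)) = -((5:ℕ) / 2) by norm_num,
    cor3_rpow_hpow (by positivity : (0:ℝ) < Ψ ^ 2), cor3_psi_base hΨ]

private lemma cor3_total_value (c1 c2 : ℝ) (Φ Θ Ψ : ℝ) (hΨ : 0 < Ψ) :
    ∫ q : ℝ × ℝ,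
        (((q.1 - Φ) ^ 2 + Ψ ^ 2 + (q.2 - Θ) ^ 2) ^ (-(3 / 2 : ℝ)) -
          c1 * ((q.1 - Φ) ^ 2 + Ψ ^ 2 + (q.2 - Θ) ^ 2) ^ (-(5 / 2 : ℝ)) +
          c2 * ((q.1 - Φ) ^ 2 + Ψ ^ 2 + (q.2 - Θ) ^ 2) ^ (-(7 / 2 : ℝ)))
        ∂((volume : Measure ℝ).prod volume) =
      Ψ⁻¹ * (2 * π) - c1 * ((Ψ⁻¹) ^ 3 * (4/3 * (π/2))) +
        c2 * ((Ψ⁻¹) ^ 5 * (16/15 * (3 * π / 8))) := by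
  have h3 := cor3_int2d (3/2) (by norm_num) Φ Θ Ψ hΨ
  have h5 := cor3_int2d (5/2) (by norm_num) Φ Θ Ψ hΨ
  have h7 := cor3_int2d (7/2) (by norm_num) Φ Θ Ψ hΨ
  have hfg : Integrable (fun q : ℝ × ℝ =>
      ((q.1 - Φ) ^ 2 + Ψ ^ 2 + (q.2 - Θ) ^ 2) ^ (-(3 / 2 : ℝ)) -
        c1 * ((q.1 - Φ) ^ 2 + Ψ ^ 2 + (q.2 - Θ) ^ 2) ^ (-(5 / 2 : ℝ)))
      ((volume : Measure ℝ).prod volume) := h3.sub (h5.const_mul c1)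
  rw [MeasureTheory.integral_add hfg (h7.const_mul c2)]
  rw [MeasureTheory.integral_sub h3 (h5.const_mul c1),
    MeasureTheory.integral_const_mul, MeasureTheory.integral_const_mul,
    cor3_prod_val (3/2) (by norm_num) Φ Θ Ψ hΨ,
    cor3_prod_val (5/2) (by norm_num) Φ Θ Ψ hΨ,
    cor3_prod_val (7/2) (by norm_num) Φ Θ Ψ hΨ]
  simp_rw [show (3/2 - 1/2 : ℝ) = 1 by norm_num, show (5/2 - 1/2 : ℝ) = 2 by norm_num,
    show (7/2 - 1/2 : ℝ) = 3 by norm_num]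
  rw [cor3_B32, cor3_B52, cor3_B72, cor3_C1, cor3_C2, cor3_C3,
    show (1 - 3/2 : ℝ) = -(1/2) by norm_num, show (1 - 5/2 : ℝ) = -(3/2) by norm_num,
    show (1 - 7/2 : ℝ) = -(5/2) by norm_num,
    cor3_psi_base hΨ, cor3_psi3 hΨ, cor3_psi5 hΨ]


private lemma cor3_tendsto_rect {G : ℝ × ℝ → ℝ}
    (hGint : Integrable G ((volume : Measure ℝ).prod volume))
    (hGnn : ∀ q, 0 ≤ G q) {r : ℝ} (hr : 0 < r) :
    Tendsto (fun L : ℝ × ℝ =>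
        ∫ x in (-(L.1 / (2 * r)))..(L.1 / (2 * r)),
          ∫ z in (-(L.2 / (2 * r)))..(L.2 / (2 * r)), G (x, z))
      (atTop ×ˢ atTop)
      (𝓝 (∫ q : ℝ × ℝ, G q ∂((volume : Measure ℝ).prod volume))) := by
  have hseq : Tendsto
      (fun n : ℕ => ∫ q in (Set.Ioc (-(n:ℝ)) n ×ˢ Set.Ioc (-(n:ℝ)) n), G q
        ∂((volume : Measure ℝ).prod volume))
      atTop (𝓝 (∫ q : ℝ × ℝ, G q ∂((volume : Measure ℝ).prod volume))) := by
    have hmeas : ∀ n : ℕ, MeasurableSet (Set.Ioc (-(n:ℝ)) n ×ˢ Set.Ioc (-(n:ℝ)) n) :=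
      fun n => measurableSet_Ioc.prod measurableSet_Ioc
    have hmono : Monotone fun n : ℕ => Set.Ioc (-(n:ℝ)) n ×ˢ Set.Ioc (-(n:ℝ)) n := by
      intro m n hmn
      have h : (m:ℝ) ≤ n := Nat.cast_le.2 hmn
      exact Set.prod_mono (Set.Ioc_subset_Ioc (by linarith) h)
        (Set.Ioc_subset_Ioc (by linarith) h)
    have hunion : (⋃ n : ℕ, Set.Ioc (-(n:ℝ)) n ×ˢ Set.Ioc (-(n:ℝ)) n) = Set.univ := by
      ext q
      simp only [Set.mem_iUnion, Set.mem_univ, iff_true, Set.mem_prod, Set.mem_Ioc]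
      obtain ⟨n, hn⟩ := exists_nat_gt (max |q.1| |q.2|)
      have h1 := (abs_lt.1 (lt_of_le_of_lt (le_max_left |q.1| |q.2|) hn))
      have h2 := (abs_lt.1 (lt_of_le_of_lt (le_max_right |q.1| |q.2|) hn))
      exact ⟨n, ⟨h1.1, h1.2.le⟩, ⟨h2.1, h2.2.le⟩⟩
    have h := tendsto_setIntegral_of_monotone hmeas hmono
      (by rw [hunion]; exact hGint.integrableOn)
    rw [hunion] at h
    simpa using h
  rw [Metric.tendsto_nhds]
  intro ε hε
  obtain ⟨n, hn⟩ := (Metric.tendsto_nhds.1 hseq ε hε).exists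
  have hsub : {y : ℝ | max (2 * r * n) 0 ≤ y} ×ˢ {y : ℝ | max (2 * r * n) 0 ≤ y} ∈
      (atTop ×ˢ atTop : Filter (ℝ × ℝ)) :=
    Filter.prod_mem_prod (eventually_ge_atTop _) (eventually_ge_atTop _)
  filter_upwards [hsub] with L hL
  obtain ⟨hL1, hL2⟩ := hL
  simp only [Set.mem_setOf_eq] at hL1 hL2
  have h2r : (0:ℝ) < 2 * r := by linarith
  have ha0 : 0 ≤ L.1 / (2 * r) := div_nonneg (le_trans (le_max_right _ _) hL1) h2r.le
  have hb0 : 0 ≤ L.2 / (2 * r) := div_nonneg (le_trans (le_max_right _ _) hL2) h2r.le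
  have han : (n:ℝ) ≤ L.1 / (2 * r) := by
    rw [le_div_iff₀ h2r]
    calc (n:ℝ) * (2 * r) = 2 * r * n := by ring
      _ ≤ max (2 * r * n) 0 := le_max_left _ _
      _ ≤ L.1 := hL1
  have hbn : (n:ℝ) ≤ L.2 / (2 * r) := by
    rw [le_div_iff₀ h2r]
    calc (n:ℝ) * (2 * r) = 2 * r * n := by ring
      _ ≤ max (2 * r * n) 0 := le_max_left _ _
      _ ≤ L.2 := hL2
  rw [intervalIntegral.integral_of_le (by linarith : -(L.1 / (2 * r)) ≤ L.1 / (2 * r))]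
  simp only [intervalIntegral.integral_of_le
    (by linarith : -(L.2 / (2 * r)) ≤ L.2 / (2 * r))]
  have heq : (∫ x in Set.Ioc (-(L.1 / (2 * r))) (L.1 / (2 * r)),
        ∫ z in Set.Ioc (-(L.2 / (2 * r))) (L.2 / (2 * r)), G (x, z)) =
      ∫ q in Set.Ioc (-(L.1 / (2 * r))) (L.1 / (2 * r)) ×ˢ
        Set.Ioc (-(L.2 / (2 * r))) (L.2 / (2 * r)), G q
        ∂((volume : Measure ℝ).prod volume) :=
    (MeasureTheory.setIntegral_prod G hGint.integrableOn).symm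
  rw [heq]
  have hsubset : Set.Ioc (-(n:ℝ)) n ×ˢ Set.Ioc (-(n:ℝ)) n ⊆
      Set.Ioc (-(L.1 / (2 * r))) (L.1 / (2 * r)) ×ˢ
        Set.Ioc (-(L.2 / (2 * r))) (L.2 / (2 * r)) :=
    Set.prod_mono (Set.Ioc_subset_Ioc (by linarith) han)
      (Set.Ioc_subset_Ioc (by linarith) hbn)
  have hlow : (∫ q in Set.Ioc (-(n:ℝ)) n ×ˢ Set.Ioc (-(n:ℝ)) n, G q
        ∂((volume : Measure ℝ).prod volume)) ≤
      ∫ q in Set.Ioc (-(L.1 / (2 * r))) (L.1 / (2 * r)) ×ˢ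
        Set.Ioc (-(L.2 / (2 * r))) (L.2 / (2 * r)), G q
        ∂((volume : Measure ℝ).prod volume) :=
    setIntegral_mono_set hGint.integrableOn (ae_of_all _ hGnn)
      (HasSubset.Subset.eventuallyLE hsubset)
  have hupp : (∫ q in Set.Ioc (-(L.1 / (2 * r))) (L.1 / (2 * r)) ×ˢ
        Set.Ioc (-(L.2 / (2 * r))) (L.2 / (2 * r)), G q
        ∂((volume : Measure ℝ).prod volume)) ≤
      ∫ q : ℝ × ℝ, G q ∂((volume : Measure ℝ).prod volume) :=
    setIntegral_le_integral hGint (ae_of_all _ hGnn)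
  have hd := hn
  rw [Real.dist_eq] at hd ⊢
  have h' : (∫ q : ℝ × ℝ, G q ∂((volume : Measure ℝ).prod volume)) -
      (∫ q in Set.Ioc (-(n:ℝ)) n ×ˢ Set.Ioc (-(n:ℝ)) n, G q
        ∂((volume : Measure ℝ).prod volume)) ≤
      |(∫ q in Set.Ioc (-(n:ℝ)) n ×ˢ Set.Ioc (-(n:ℝ)) n, G q
        ∂((volume : Measure ℝ).prod volume)) -
        ∫ q : ℝ × ℝ, G q ∂((volume : Measure ℝ).prod volume)| := by
    rw [abs_sub_comm]; exact le_abs_self _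
  rw [abs_of_nonpos (by linarith), neg_sub]
  linarith

/-- Corollary 3 of the paper: with `k₀ = 2π/λ` and
`fₙ(x,z) = ((x - Φ)² + Ψ² + (z - Θ)²)^{-n/2}`, the CAP-array channel gain
`G̃(Lx, Lz) = (η/(8 R_rad)) (Ψ/(4π)) ∬_{[-Lx/(2r),Lx/(2r)]×[-Lz/(2r),Lz/(2r)]}
(f₃ - f₅/(k₀²r²) + f₇/(k₀⁴r⁴)) dx dz` converges, as `Lx, Lz → ∞`, to
`(η/(8 R_rad)) (1/2 - λ²/(24π²r²Ψ²) + λ⁴/(160π⁴r⁴Ψ⁴))`. -/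
theorem stmt_6 (eta Rrad lam r Ψ Φ Θ k₀ : ℝ) (heta : 0 < eta) (hRrad : 0 < Rrad)
    (hlam : 0 < lam) (hr : 0 < r) (hΨ : 0 < Ψ) (hk : k₀ = 2 * π / lam) :
    Filter.Tendsto
      (fun L : ℝ × ℝ =>
        eta / (8 * Rrad) * (Ψ / (4 * π)) *
          ∫ x in (-(L.1 / (2 * r)))..(L.1 / (2 * r)),
            ∫ z in (-(L.2 / (2 * r)))..(L.2 / (2 * r)),
              (((x - Φ) ^ 2 + Ψ ^ 2 + (z - Θ) ^ 2) ^ (-(3 / 2 : ℝ)) -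
                (1 / (k₀ ^ 2 * r ^ 2)) *
                  ((x - Φ) ^ 2 + Ψ ^ 2 + (z - Θ) ^ 2) ^ (-(5 / 2 : ℝ)) +
                (1 / (k₀ ^ 4 * r ^ 4)) *
                  ((x - Φ) ^ 2 + Ψ ^ 2 + (z - Θ) ^ 2) ^ (-(7 / 2 : ℝ))))
      (Filter.atTop ×ˢ Filter.atTop)
      (𝓝 (eta / (8 * Rrad) *
        (1 / 2 - lam ^ 2 / (24 * π ^ 2 * r ^ 2 * Ψ ^ 2) +
          lam ^ 4 / (160 * π ^ 4 * r ^ 4 * Ψ ^ 4)))) := by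

  have hπ : (0:ℝ) < π := Real.pi_pos
  have hk0 : 0 < k₀ := by rw [hk]; positivity
  have h3 := cor3_int2d (3/2) (by norm_num) Φ Θ Ψ hΨ
  have h5 := cor3_int2d (5/2) (by norm_num) Φ Θ Ψ hΨ
  have h7 := cor3_int2d (7/2) (by norm_num) Φ Θ Ψ hΨ
  have hGint : Integrable (fun q : ℝ × ℝ =>
      ((q.1 - Φ) ^ 2 + Ψ ^ 2 + (q.2 - Θ) ^ 2) ^ (-(3 / 2 : ℝ)) -
        (1 / (k₀ ^ 2 * r ^ 2)) *
          ((q.1 - Φ) ^ 2 + Ψ ^ 2 + (q.2 - Θ) ^ 2) ^ (-(5 / 2 : ℝ)) +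
        (1 / (k₀ ^ 4 * r ^ 4)) *
          ((q.1 - Φ) ^ 2 + Ψ ^ 2 + (q.2 - Θ) ^ 2) ^ (-(7 / 2 : ℝ)))
      ((volume : Measure ℝ).prod volume) :=
    (h3.sub (h5.const_mul _)).add (h7.const_mul _)
  have hGnn : ∀ q : ℝ × ℝ,
      0 ≤ ((q.1 - Φ) ^ 2 + Ψ ^ 2 + (q.2 - Θ) ^ 2) ^ (-(3 / 2 : ℝ)) -
        (1 / (k₀ ^ 2 * r ^ 2)) *
          ((q.1 - Φ) ^ 2 + Ψ ^ 2 + (q.2 - Θ) ^ 2) ^ (-(5 / 2 : ℝ)) +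
        (1 / (k₀ ^ 4 * r ^ 4)) *
          ((q.1 - Φ) ^ 2 + Ψ ^ 2 + (q.2 - Θ) ^ 2) ^ (-(7 / 2 : ℝ)) := by
    intro q
    have hc2 : (1 / (k₀ ^ 4 * r ^ 4)) = (1 / (k₀ ^ 2 * r ^ 2)) ^ 2 := by ring
    rw [hc2]
    exact cor3_nonneg (by positivity) (by positivity)
  have key := (cor3_tendsto_rect hGint hGnn hr).const_mul
    (eta / (8 * Rrad) * (Ψ / (4 * π)))
  rw [cor3_total_value (1 / (k₀ ^ 2 * r ^ 2)) (1 / (k₀ ^ 4 * r ^ 4)) Φ Θ Ψ hΨ] at key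
  have hEq : eta / (8 * Rrad) * (Ψ / (4 * π)) *
      (Ψ⁻¹ * (2 * π) - 1 / (k₀ ^ 2 * r ^ 2) * ((Ψ⁻¹) ^ 3 * (4/3 * (π/2))) +
        1 / (k₀ ^ 4 * r ^ 4) * ((Ψ⁻¹) ^ 5 * (16/15 * (3 * π / 8)))) =
      eta / (8 * Rrad) *
        (1 / 2 - lam ^ 2 / (24 * π ^ 2 * r ^ 2 * Ψ ^ 2) +
          lam ^ 4 / (160 * π ^ 4 * r ^ 4 * Ψ ^ 4)) := by
    rw [hk]
    field_simp
    ring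
  rw [← hEq]
  exact key
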